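/- Let d ≥ 1 and let u : ℝ^d → ℝ be a smooth non-negative function on Euclidean space ℝ^d. If there exists a constant c > 0 such that Δu(x) ≥ c·u(x)² for every x ∈ ℝ^d, where Δ denotes the Euclidean Laplacian, then u vanishes identically on ℝ^d. -/

import Mathlib

set_option maxHeartbeats 1000000

open Filter Topology


/-- 1-D second derivative test at a local max. -/
lemma auxA {g g' : ℝ → ℝ} {s : ℝ} (hg : ∀ᶠ t in 𝓝 (0:ℝ), HasDerivAt g (g' t) t)
    (hg' : HasDerivAt g' s 0) (hmax : IsLocalMax g 0) : s ≤ 0 := by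
  by_contra hs
  push_neg at hs
  have h0 : g' 0 = 0 := by
    have := hmax.deriv_eq_zero
    rwa [hg.self_of_nhds.deriv] at this
  -- slope of g' tends to s > 0
  have hslope : Tendsto (slope g' 0) (𝓝[≠] (0:ℝ)) (𝓝 s) :=
    hasDerivAt_iff_tendsto_slope.1 hg'
  have hpos : ∀ᶠ t in 𝓝[>] (0:ℝ), 0 < g' t := by
    have h1 : ∀ᶠ t in 𝓝[>] (0:ℝ), 0 < slope g' 0 t := by
      have := hslope.mono_left (nhdsWithin_mono _ (by intro t ht; exact ne_of_gt ht))
      exact this.eventually (eventually_gt_nhds hs)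
    filter_upwards [h1, self_mem_nhdsWithin] with t h1 h2
    rw [slope_def_field, h0, sub_zero, sub_zero, div_pos_iff] at h1
    rcases h1 with ⟨h, _⟩ | ⟨_, h⟩
    · exact h
    · exact absurd h2 (not_lt.2 h.le)
  -- extract δ
  rw [eventually_nhdsWithin_iff] at hpos
  rcases Metric.eventually_nhds_iff.1 (hpos.and (hg.and hmax)) with ⟨δ, hδ, H⟩
  set δ' := δ/2 with hδ'def
  have hδ' : 0 < δ' := half_pos hδ
  have hmono : StrictMonoOn g (Set.Icc 0 δ') := by
    apply strictMonoOn_of_deriv_pos (convex_Icc 0 δ')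
    · apply ContinuousOn.congr (f := g)
      · exact continuousOn_of_forall_continuousAt fun t ht => by
          by_cases h : |t| < δ
          · exact ((H (by rwa [Real.dist_eq, sub_zero])).2.1).continuousAt
          · exfalso; apply h
            rw [abs_lt]; constructor <;> [linarith [ht.1]; linarith [ht.2, half_lt_self hδ]]
      · exact fun t _ => rfl
    · intro t ht
      rw [interior_Icc] at ht
      have habs : |t| < δ := by rw [abs_lt]; constructor <;> [linarith [ht.1]; linarith [ht.2, half_lt_self hδ]]
      rw [((H (by rwa [Real.dist_eq, sub_zero])).2.1).deriv]
      exact (H (by rwa [Real.dist_eq, sub_zero])).1 ht.1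
  have hle : g δ' ≤ g 0 := by
    have habs : |δ'| < δ := by rw [abs_of_pos hδ']; exact half_lt_self hδ
    exact (H (by rwa [Real.dist_eq, sub_zero])).2.2
  exact absurd (hmono (by simp [hδ'.le]) (by simp [hδ'.le]) hδ') (not_lt.2 hle)

/-- Second derivative test in a direction `v` at a local max. -/
lemma auxC {E : Type*} [NormedAddCommGroup E] [NormedSpace ℝ E] {f : E → ℝ} {x v : E}
    (hf : ∀ᶠ y in 𝓝 x, DifferentiableAt ℝ f y)
    (hf2 : DifferentiableAt ℝ (fun y => fderiv ℝ f y v) x)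
    (hmax : IsLocalMax f x) : fderiv ℝ (fun y => fderiv ℝ f y v) x v ≤ 0 := by
  have hline : ∀ t : ℝ, HasDerivAt (fun t : ℝ => x + t • v) v t := by
    intro t
    simpa using ((hasDerivAt_id t).smul_const v).const_add x
  have hcont : Continuous (fun t : ℝ => x + t • v) :=
    continuous_const.add (continuous_id.smul continuous_const)
  have hten : Tendsto (fun t : ℝ => x + t • v) (𝓝 0) (𝓝 x) := by
    have := hcont.tendsto 0
    simpa using this
  set g : ℝ → ℝ := fun t => f (x + t • v) with hgdef
  set g' : ℝ → ℝ := fun t => fderiv ℝ f (x + t • v) v with hg'def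
  have hg : ∀ᶠ t in 𝓝 (0:ℝ), HasDerivAt g (g' t) t := by
    filter_upwards [hten.eventually hf] with t ht
    exact ht.hasFDerivAt.comp_hasDerivAt t (hline t)
  have hg' : HasDerivAt g' (fderiv ℝ (fun y => fderiv ℝ f y v) x v) 0 := by
    have h2 : HasFDerivAt (fun y => fderiv ℝ f y v) (fderiv ℝ (fun y => fderiv ℝ f y v) x) (x + (0:ℝ) • v) := by simpa using hf2.hasFDerivAt
    have h := h2.comp_hasDerivAt 0 (hline 0)
    exact h
  have hmax' : IsLocalMax g 0 := by
    have : ∀ᶠ t in 𝓝 (0:ℝ), f (x + t • v) ≤ f x := hten.eventually hmax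
    simpa [hgdef, IsLocalMax, IsMaxFilter] using this
  exact auxA hg hg' hmax'


section
variable {d : ℕ}

local notation "E" => EuclideanSpace ℝ (Fin d)

lemma auxD1 (R A : ℝ) {y : E} (hs : R^2 - ‖y‖^2 ≠ 0) :
    HasFDerivAt (fun z : E => A * ((R^2 - ‖z‖^2)^2)⁻¹)
      ((4*A*((R^2-‖y‖^2)^3)⁻¹) • innerSL ℝ y) y := by
  have hN : HasFDerivAt (fun z : E => ‖z‖^2) (2 • innerSL ℝ y) y :=
    (hasStrictFDerivAt_norm_sq y).hasFDerivAt
  have hφ : HasDerivAt (fun s : ℝ => A * ((R^2 - s)^2)⁻¹) (2*A*((R^2-‖y‖^2)^3)⁻¹) (‖y‖^2) := by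
    have h1 : HasDerivAt (fun s : ℝ => R^2 - s) (-1) (‖y‖^2) := (hasDerivAt_id _).const_sub (R^2)
    have h2 := ((h1.pow 2).inv (pow_ne_zero 2 hs)).const_mul A
    refine h2.congr_deriv ?_
    simp only [Pi.pow_apply]
    field_simp
    ring
  have h3 := hφ.comp_hasFDerivAt y hN
  refine h3.congr_fderiv ?_
  ext w
  simp [smul_smul]
  ring

lemma auxD2 (R A : ℝ) {y : E} (hs : R^2 - ‖y‖^2 ≠ 0) :
    HasFDerivAt (fun z : E => A * ((R^2 - ‖z‖^2)^3)⁻¹)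
      ((6*A*((R^2-‖y‖^2)^4)⁻¹) • innerSL ℝ y) y := by
  have hN : HasFDerivAt (fun z : E => ‖z‖^2) (2 • innerSL ℝ y) y :=
    (hasStrictFDerivAt_norm_sq y).hasFDerivAt
  have hφ : HasDerivAt (fun s : ℝ => A * ((R^2 - s)^3)⁻¹) (3*A*((R^2-‖y‖^2)^4)⁻¹) (‖y‖^2) := by
    have h1 : HasDerivAt (fun s : ℝ => R^2 - s) (-1) (‖y‖^2) := (hasDerivAt_id _).const_sub (R^2)
    have h2 := ((h1.pow 3).inv (pow_ne_zero 3 hs)).const_mul A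
    refine h2.congr_deriv ?_
    simp only [Pi.pow_apply]
    field_simp
    ring
  have h3 := hφ.comp_hasFDerivAt y hN
  refine h3.congr_fderiv ?_
  ext w
  simp [smul_smul]
  ring

lemma auxW (R A : ℝ) (i : Fin d) {y : E} (hs : R^2 - ‖y‖^2 ≠ 0) :
    HasFDerivAt (fun z : E => 4*A*((R^2-‖z‖^2)^3)⁻¹ * z i)
      ((4*A*((R^2-‖y‖^2)^3)⁻¹) • (EuclideanSpace.proj i : E →L[ℝ] ℝ)
        + (y i) • ((24*A*((R^2-‖y‖^2)^4)⁻¹) • innerSL ℝ y)) y := by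
  have hc := auxD2 R (4*A) hs
  have hp : HasFDerivAt (fun z : E => z i) (EuclideanSpace.proj i : E →L[ℝ] ℝ) y :=
    (EuclideanSpace.proj i : E →L[ℝ] ℝ).hasFDerivAt
  have h2 := hc.mul hp
  refine h2.congr_fderiv ?_
  ext w
  simp only [ContinuousLinearMap.add_apply, ContinuousLinearMap.smul_apply, smul_eq_mul]
  ring

lemma normsq_eq_sum (z : E) : ‖z‖^2 = ∑ i, (z i)^2 := by
  rw [EuclideanSpace.norm_eq, Real.sq_sqrt (by positivity)]
  simp [sq_abs]

lemma auxBound (u : E → ℝ) (hu : ContDiff ℝ (⊤ : ℕ∞) u) (hu0 : ∀ x, 0 ≤ u x)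
    (c : ℝ) (hc : 0 < c)
    (h : ∀ x, c * u x ^ 2 ≤
      ∑ i : Fin d, fderiv ℝ (fun y => fderiv ℝ u y (EuclideanSpace.single i (1 : ℝ))) x
        (EuclideanSpace.single i (1 : ℝ)))
    (R : ℝ) (hR : 0 < R) :
    ∀ y : E, ‖y‖^2 < R^2 → u y ≤ ((24+4*(d:ℝ))*R^2/c) * (((R^2-‖y‖^2)^2)⁻¹) := by
  have hudiff : Differentiable ℝ u := hu.differentiable (by simp)
  set A : ℝ := (24+4*(d:ℝ))*R^2/c with hAdef
  have hA : 0 < A := by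
    apply div_pos _ hc
    have : (0:ℝ) ≤ (d:ℝ) := Nat.cast_nonneg d
    positivity
  set V : E → ℝ := fun z => A * ((R^2-‖z‖^2)^2)⁻¹ with hVdef
  set f : E → ℝ := fun z => u z - V z with hfdef
  -- bound for u on the closed ball
  obtain ⟨M, hM, hM0⟩ : ∃ M, (∀ z ∈ Metric.closedBall (0:E) R, u z ≤ M) ∧ 0 ≤ M := by
    obtain ⟨z0, hz0K, hz0⟩ := (isCompact_closedBall (0:E) R).exists_isMaxOn
      ⟨0, by simp [hR.le]⟩ hu.continuous.continuousOn
    exact ⟨u z0, fun z hz => hz0 hz, hu0 z0⟩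
  have hball : ∀ z : E, ‖z‖^2 < R^2 → z ∈ Metric.closedBall (0:E) R := by
    intro z hz
    rw [Metric.mem_closedBall, dist_zero_right]
    nlinarith [norm_nonneg z]
  set B : ℝ := M + A*((R^2)^2)⁻¹ + 1 with hBdef
  have hB : 0 < B := by positivity
  set σ : ℝ := min (R^2/2) (Real.sqrt (A/B)) with hσdef
  have hσ : 0 < σ := lt_min (by positivity) (Real.sqrt_pos.2 (by positivity))
  have hσR : σ ≤ R^2/2 := min_le_left _ _
  have hσ2 : σ^2 ≤ A/B := by
    have h1 : σ ≤ Real.sqrt (A/B) := min_le_right _ _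
    calc σ^2 ≤ (Real.sqrt (A/B))^2 := by nlinarith [Real.sqrt_nonneg (A/B)]
    _ = A/B := Real.sq_sqrt (by positivity)
  set K : Set (EuclideanSpace ℝ (Fin d)) := {z : E | ‖z‖^2 ≤ R^2 - σ} with hKdef
  have hK0 : (0:E) ∈ K := by
    simp only [hKdef, Set.mem_setOf_eq, norm_zero]
    nlinarith
  have hKsub : K ⊆ Metric.closedBall (0:E) R := by
    intro z hz
    rw [Metric.mem_closedBall, dist_zero_right]
    have : ‖z‖^2 ≤ R^2 - σ := hz
    nlinarith [norm_nonneg z]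
  have hKcomp : IsCompact K := (isCompact_closedBall (0:E) R).of_isClosed_subset
    (isClosed_le (by fun_prop) continuous_const) hKsub
  have hfcont : ContinuousOn f K := by
    apply ContinuousOn.sub hu.continuous.continuousOn
    apply ContinuousOn.mul continuousOn_const
    apply ContinuousOn.inv₀ (by fun_prop)
    intro z hz
    have hz' : ‖z‖^2 ≤ R^2 - σ := hz
    have : 0 < R^2 - ‖z‖^2 := by nlinarith
    positivity
  obtain ⟨xm, hxmK, hxmmax⟩ := hKcomp.exists_isMaxOn ⟨0, hK0⟩ hfcont
  set Ω : Set (EuclideanSpace ℝ (Fin d)) := {z : E | ‖z‖^2 < R^2} with hΩdef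
  have hΩopen : IsOpen Ω := isOpen_lt (by fun_prop) continuous_const
  have hsz : ∀ z ∈ Ω, 0 < R^2 - ‖z‖^2 := fun z hz => by
    have : ‖z‖^2 < R^2 := hz
    linarith
  have hxmΩ : xm ∈ Ω := by
    have h1 : ‖xm‖^2 ≤ R^2 - σ := hxmK
    show ‖xm‖^2 < R^2
    linarith
  -- global maximality on Ω
  have hglobal : ∀ z ∈ Ω, f z ≤ f xm := by
    intro z hz
    by_cases hzK : z ∈ K
    · exact hxmmax hzK
    · have hz1 : R^2 - σ < ‖z‖^2 := by
        by_contra h'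
        exact hzK (by simpa [hKdef] using not_lt.1 h')
      have hz2 : ‖z‖^2 < R^2 := hz
      have ht : 0 < R^2 - ‖z‖^2 := by linarith
      have htσ : R^2 - ‖z‖^2 < σ := by linarith
      -- V z ≥ B
      have hVz : B ≤ V z := by
        have h1 : (R^2-‖z‖^2)^2 ≤ σ^2 := by nlinarith
        have h2 : (σ^2)⁻¹ ≤ ((R^2-‖z‖^2)^2)⁻¹ := by
          apply inv_anti₀ (by positivity) h1
        have h3 : A * (σ^2)⁻¹ ≤ A * ((R^2-‖z‖^2)^2)⁻¹ :=
          mul_le_mul_of_nonneg_left h2 hA.le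
        have h4 : B ≤ A * (σ^2)⁻¹ := by
          rw [← div_eq_mul_inv, le_div_iff₀ (by positivity)]
          rw [div_eq_mul_inv] at hσ2
          calc B * σ^2 = σ^2 * B := by ring
          _ ≤ (A * B⁻¹) * B := mul_le_mul_of_nonneg_right hσ2 hB.le
          _ = A := by field_simp
        exact h4.trans h3
      have huz : u z ≤ M := hM z (hball z hz2)
      have hf0 : f 0 ≤ f xm := hxmmax hK0
      have hV0 : V 0 = A * ((R^2)^2)⁻¹ := by simp [hVdef]
      have : f z ≤ M - B := by
        simp only [hfdef]
        linarith
      have hf0' : -(A*((R^2)^2)⁻¹) ≤ f 0 := by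
        simp only [hfdef, hV0]
        linarith [hu0 0]
      calc f z ≤ M - B := this
      _ ≤ f 0 := by simp only [hBdef] at *; linarith
      _ ≤ f xm := hf0
  have hlocmax : IsLocalMax f xm := by
    filter_upwards [hΩopen.mem_nhds hxmΩ] with z hz
    exact hglobal z hz
  -- second derivative comparison at xm
  have hsm : R^2 - ‖xm‖^2 ≠ 0 := (hsz xm hxmΩ).ne'
  have hfdiff : ∀ᶠ z in 𝓝 xm, DifferentiableAt ℝ f z := by
    filter_upwards [hΩopen.mem_nhds hxmΩ] with z hz
    exact (hudiff z).sub (auxD1 R A (hsz z hz).ne').differentiableAt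
  have hD2 : ∀ i : Fin d,
      fderiv ℝ (fun y => fderiv ℝ u y (EuclideanSpace.single i (1 : ℝ))) xm
        (EuclideanSpace.single i (1 : ℝ)) ≤
      4*A*((R^2-‖xm‖^2)^3)⁻¹ + 24*A*((R^2-‖xm‖^2)^4)⁻¹ * (xm i)^2 := by
    intro i
    set e : EuclideanSpace ℝ (Fin d) := EuclideanSpace.single i (1:ℝ) with hedef
    set W : E → ℝ := fun z => 4*A*((R^2-‖z‖^2)^3)⁻¹ * z i with hWdef
    have hWx := auxW R A i hsm
    have hEq : (fun z => fderiv ℝ f z e) =ᶠ[𝓝 xm]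
        (fun z => fderiv ℝ u z e - W z) := by
      filter_upwards [hΩopen.mem_nhds hxmΩ] with z hz
      have hVz := auxD1 R A (hsz z hz).ne'
      have hsub : fderiv ℝ f z = fderiv ℝ u z - fderiv ℝ V z :=
        fderiv_sub (hudiff z) hVz.differentiableAt
      rw [hsub, hVz.fderiv]
      simp only [ContinuousLinearMap.sub_apply, ContinuousLinearMap.smul_apply,
        innerSL_apply_apply, smul_eq_mul, hWdef, hedef]
      rw [EuclideanSpace.inner_single_right]
      simp
    have hu2diff : Differentiable ℝ (fun z : E => fderiv ℝ u z e) :=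
      ((hu.fderiv_right (m := ((⊤:ℕ∞) : WithTop ℕ∞)) (by exact_mod_cast le_rfl)).clm_apply contDiff_const).differentiable (by simp)
    have hfi_diff : DifferentiableAt ℝ (fun z => fderiv ℝ f z e) xm := by
      rw [hEq.differentiableAt_iff]
      exact (hu2diff xm).sub hWx.differentiableAt
    have hle := auxC hfdiff hfi_diff hlocmax
    rw [hEq.fderiv_eq, fderiv_fun_sub (hu2diff xm) hWx.differentiableAt] at hle
    simp only [ContinuousLinearMap.sub_apply] at hle
    rw [hWx.fderiv] at hle
    simp only [ContinuousLinearMap.add_apply, ContinuousLinearMap.smul_apply,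
      innerSL_apply_apply, smul_eq_mul, hedef] at hle
    rw [EuclideanSpace.inner_single_right] at hle
    have hproj : (EuclideanSpace.proj i : E →L[ℝ] ℝ) (EuclideanSpace.single i (1:ℝ)) = 1 := by
      simp
    rw [hproj] at hle
    simp only [conj_trivial] at hle
    nlinarith [hle]
  -- sum up
  have hsum := h xm
  have hsum2 : c * u xm ^ 2 ≤
      4*(d:ℝ)*A*((R^2-‖xm‖^2)^3)⁻¹ + 24*A*((R^2-‖xm‖^2)^4)⁻¹ * ‖xm‖^2 := by
    calc c * u xm ^ 2 ≤ ∑ i : Fin d,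
        fderiv ℝ (fun y => fderiv ℝ u y (EuclideanSpace.single i (1 : ℝ))) xm
          (EuclideanSpace.single i (1 : ℝ)) := hsum
    _ ≤ ∑ i : Fin d, (4*A*((R^2-‖xm‖^2)^3)⁻¹ + 24*A*((R^2-‖xm‖^2)^4)⁻¹ * (xm i)^2) :=
        Finset.sum_le_sum (fun i _ => hD2 i)
    _ = 4*(d:ℝ)*A*((R^2-‖xm‖^2)^3)⁻¹ + 24*A*((R^2-‖xm‖^2)^4)⁻¹ * ‖xm‖^2 := by
        rw [Finset.sum_add_distrib, Finset.sum_const, ← Finset.mul_sum, normsq_eq_sum]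
        simp [Finset.card_univ]
        ring
  -- conclude u xm ≤ V xm
  have hs0 : 0 < R^2 - ‖xm‖^2 := hsz xm hxmΩ
  have hsR : R^2 - ‖xm‖^2 ≤ R^2 := by nlinarith [norm_nonneg xm]
  have hcA : c * A = (24+4*(d:ℝ))*R^2 := by
    rw [hAdef]; field_simp
  have hVxm : V xm = A * (((R^2-‖xm‖^2))^2)⁻¹ := rfl
  have hkey : c * u xm ^ 2 ≤ c * (V xm)^2 := by
    rw [hVxm]
    set s : ℝ := R^2 - ‖xm‖^2 with hsdef
    have hnorm : ‖xm‖^2 = R^2 - s := by rw [hsdef]; ring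
    calc c * u xm ^ 2 ≤ 4*(d:ℝ)*A*(s^3)⁻¹ + 24*A*(s^4)⁻¹ * ‖xm‖^2 := hsum2
    _ ≤ c * (A * ((s^2))⁻¹)^2 := by
        rw [hnorm]
        have e1 : 4*(d:ℝ)*A*(s^3)⁻¹ + 24*A*(s^4)⁻¹*(R^2-s)
            = (4*(d:ℝ)*A*s + 24*A*(R^2-s)) * (s^4)⁻¹ := by
          field_simp
        have e2 : c * (A * ((s^2))⁻¹)^2 = ((24+4*(d:ℝ))*R^2*A) * (s^4)⁻¹ := by
          rw [← hcA]
          field_simp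
        rw [e1, e2]
        apply mul_le_mul_of_nonneg_right _ (by positivity)
        have hd0 : (0:ℝ) ≤ (d:ℝ) := Nat.cast_nonneg d
        nlinarith [hA, hs0, hsR, mul_nonneg hd0 hA.le]
  have hVpos : 0 < V xm := by rw [hVxm]; positivity
  have hup : u xm ≤ V xm := by
    by_contra hlt
    push_neg at hlt
    have h2 : V xm ^ 2 < u xm ^ 2 := by nlinarith
    nlinarith [mul_lt_mul_of_pos_left h2 hc]
  intro y hy
  have h1 : f y ≤ f xm := hglobal y hy
  have h2 : u y ≤ V y := by
    simp only [hfdef] at h1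
    linarith
  exact h2


end

/-- Nishikawa's lemma in Euclidean space: a smooth non-negative function `u` on `ℝ^d`
satisfying `Δu ≥ c·u²` for some constant `c > 0` (with `Δ` the Euclidean Laplacian,
written as the sum of the second partial derivatives) vanishes identically. -/
theorem stmt_0 (d : ℕ) (hd : 1 ≤ d) (u : EuclideanSpace ℝ (Fin d) → ℝ)
    (hu : ContDiff ℝ (⊤ : ℕ∞) u) (hu0 : ∀ x, 0 ≤ u x) (c : ℝ) (hc : 0 < c)
    (h : ∀ x, c * u x ^ 2 ≤
      ∑ i : Fin d, fderiv ℝ (fun y => fderiv ℝ u y (EuclideanSpace.single i (1 : ℝ))) x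
        (EuclideanSpace.single i (1 : ℝ))) :
    ∀ x, u x = 0 := by
  intro x
  refine le_antisymm ?_ (hu0 x)
  have key : ∀ ε : ℝ, 0 < ε → u x ≤ ε := by
    intro ε hε
    set a : ℝ := ‖x‖^2 with hadef
    have ha : 0 ≤ a := by positivity
    set P : ℝ := max (2*a+1) ((96 + 16*(d:ℝ))/(c*ε)) with hPdef
    have hP1 : 2*a+1 ≤ P := le_max_left _ _
    have hP2 : (96 + 16*(d:ℝ))/(c*ε) ≤ P := le_max_right _ _
    have hP : 0 < P := by linarith
    set R : ℝ := Real.sqrt P with hRdef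
    have hR : 0 < R := Real.sqrt_pos.2 hP
    have hR2 : R^2 = P := Real.sq_sqrt hP.le
    have hxin : ‖x‖^2 < R^2 := by rw [hR2]; linarith
    have hb := auxBound u hu hu0 c hc h R hR x hxin
    rw [hR2] at hb
    have hPa : 0 < P - a := by linarith
    have hd0 : (0:ℝ) ≤ (d:ℝ) := Nat.cast_nonneg d
    have hkey : u x * (P-a)^2 ≤ (24+4*(d:ℝ))*P/c := by
      calc u x * (P-a)^2 ≤ (((24+4*(d:ℝ))*P/c) * (((P-a)^2)⁻¹)) * (P-a)^2 :=
        mul_le_mul_of_nonneg_right hb (sq_nonneg _)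
      _ = (24+4*(d:ℝ))*P/c := by field_simp
    have hkey2 : c * (u x * (P-a)^2) ≤ (24+4*(d:ℝ))*P := by
      rw [mul_comm c]
      calc u x * (P-a)^2 * c ≤ ((24+4*(d:ℝ))*P/c) * c :=
        mul_le_mul_of_nonneg_right hkey hc.le
      _ = (24+4*(d:ℝ))*P := by field_simp
    have h96 : 96 + 16*(d:ℝ) ≤ c*ε*P := by
      rw [div_le_iff₀ (by positivity)] at hP2
      linarith [hP2]
    by_contra hux
    push_neg at hux
    have hPa2 : P/2 ≤ P - a := by linarith
    have hq1 : c * ε * (P-a)^2 < c * (u x * (P-a)^2) := by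
      have := mul_lt_mul_of_pos_right hux (by positivity : (0:ℝ) < (P-a)^2)
      nlinarith [this]
    have hq2 : c * ε * (P/2)^2 ≤ c * ε * (P-a)^2 := by
      apply mul_le_mul_of_nonneg_left _ (by positivity)
      nlinarith
    nlinarith [hq1, hq2, hkey2, h96, mul_pos hc hε, hP]
  by_contra hpos
  push_neg at hpos
  linarith [key (u x / 2) (by linarith)]
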